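/- Fix an integer m ≥ 1 and a real λ with 0 < λ < 1/2. For a positive integer n, let A be a subset chosen uniformly at random from F_{λ,n}, let X̄ = C(|A|, m) (the m-th evaluation of the all-ones sequence at A), and let σ̄² = E[X̄²] − (E[X̄])². Then for every ε > 0 there exists n₀ such that for all n ≥ n₀: σ̄² ≤ (1 + ε) · √n · (λn)^{2m−2} / ((m−1)!)². -/

import Mathlib

open Finset

/-- `Fam n l` is the family `F_{λ,n}` of all subsets of `{1,…,n}` of size at most `λ·n`. -/
noncomputable def Fam (n : ℕ) (l : ℝ) : Finset (Finset (Fin n)) :=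
  Finset.univ.filter (fun A => (A.card : ℝ) ≤ l * n)

private lemma choose_lip (t : ℕ) : ∀ k a : ℕ, a ≤ k →
    Nat.choose k (t+1) ≤ Nat.choose a (t+1) + (k - a) * Nat.choose k t := by
  intro k
  induction k with
  | zero => intro a ha; interval_cases a; simp
  | succ k ih =>
    intro a ha
    rcases eq_or_lt_of_le ha with rfl | h
    · simp
    · have ha' : a ≤ k := Nat.lt_succ_iff.mp h
      have h1 := ih a ha'
      have h2 : Nat.choose k t ≤ Nat.choose (k+1) t :=
        Nat.choose_le_choose t (Nat.le_succ k)
      have hsub : k + 1 - a = (k - a) + 1 := by omega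
      calc Nat.choose (k+1) (t+1) = Nat.choose k (t+1) + Nat.choose k t := by
            rw [Nat.choose_succ_succ]; ring
        _ ≤ (Nat.choose a (t+1) + (k - a) * Nat.choose k t) + Nat.choose k t := by
            omega
        _ = Nat.choose a (t+1) + ((k - a) + 1) * Nat.choose k t := by ring
        _ ≤ Nat.choose a (t+1) + (k + 1 - a) * Nat.choose (k+1) t := by
            rw [hsub]
            exact Nat.add_le_add_left (Nat.mul_le_mul_left _ h2) _

private lemma var_le_sq {α : Type*} (s : Finset α) (f : α → ℝ) (c : ℝ)
    (hs : 0 < (s.card : ℝ)) :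
    (∑ a ∈ s, f a ^ 2) / s.card - ((∑ a ∈ s, f a) / s.card) ^ 2 ≤
      (∑ a ∈ s, (f a - c) ^ 2) / s.card := by
  set N : ℝ := (s.card : ℝ)
  set S1 := ∑ a ∈ s, f a
  set S2 := ∑ a ∈ s, f a ^ 2
  have hexp : (∑ a ∈ s, (f a - c) ^ 2) = S2 - 2*c*S1 + N*c^2 := by
    have : ∀ a ∈ s, (f a - c)^2 = f a ^2 - 2*c*(f a) + c^2 := by intro a _; ring
    rw [Finset.sum_congr rfl this, Finset.sum_add_distrib, Finset.sum_sub_distrib,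
      Finset.sum_const, ← Finset.mul_sum, nsmul_eq_mul]
  rw [hexp]
  have h1 : (S2 - 2*c*S1 + N*c^2)/N = S2/N - 2*c*(S1/N) + c^2 := by
    field_simp
  rw [h1]
  nlinarith [sq_nonneg (S1/N - c)]

private lemma sum_card_filter (n k : ℕ) (g : ℕ → ℝ) :
    ∑ A ∈ (Finset.univ.filter (fun A : Finset (Fin n) => A.card ≤ k)), g A.card
      = ∑ i ∈ Finset.range (k+1), (Nat.choose n i : ℝ) * g i := by
  have hset : (Finset.univ.filter (fun A : Finset (Fin n) => A.card ≤ k))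
      = (Finset.range (k+1)).biUnion
          (fun i => Finset.powersetCard i (Finset.univ : Finset (Fin n))) := by
    ext A
    simp [Finset.mem_powersetCard, Nat.lt_succ_iff]
  rw [hset, Finset.sum_biUnion]
  · apply Finset.sum_congr rfl
    intro i _
    have : ∀ A ∈ Finset.powersetCard i (Finset.univ : Finset (Fin n)),
        g A.card = g i := by
      intro A hA
      rw [(Finset.mem_powersetCard.mp hA).2]
    rw [Finset.sum_congr rfl this, Finset.sum_const, Finset.card_powersetCard,
      Finset.card_univ, Fintype.card_fin, nsmul_eq_mul]
  · intro i _ j _ hij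
    simp only [Function.onFun, Finset.disjoint_left]
    intro A hA hA'
    exact hij ((Finset.mem_powersetCard.mp hA).2.symm.trans (Finset.mem_powersetCard.mp hA').2)

private lemma choose_decay (l : ℝ) (hl0 : 0 < l) (hl : l < 1/2) (n k : ℕ)
    (hn : 0 < n) (hk : (k : ℝ) ≤ l * n) :
    ∀ j ≤ k, (Nat.choose n (k - j) : ℝ) ≤ (l/(1-l))^j * Nat.choose n k := by
  have hn' : (0:ℝ) < n := by exact_mod_cast hn
  have hl1 : 0 < 1 - l := by linarith
  have hkn : (k:ℝ) < n := by nlinarith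
  have hknn : k < n := by exact_mod_cast hkn
  intro j
  induction j with
  | zero => intro _; simp
  | succ j ih =>
    intro hj
    have hj' : j ≤ k := Nat.le_of_succ_le hj
    set i := k - (j+1) with hi
    have hii : i + 1 = k - j := by omega
    have hin : i < n := by omega
    have hid := Nat.choose_succ_right_eq n i
    have hidR : (Nat.choose n (i+1) : ℝ) * (i+1) = (Nat.choose n i : ℝ) * ((n:ℝ) - i) := by
      have := congrArg (fun x : ℕ => (x:ℝ)) hid
      push_cast [Nat.cast_sub (le_of_lt hin)] at this
      convert this using 2
    have hni : (0:ℝ) < (n:ℝ) - i := by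
      have : (i:ℝ) < n := by exact_mod_cast hin
      linarith
    have hnum : ((i:ℝ) + 1) ≤ l * n := by
      have : (i:ℝ) + 1 ≤ (k:ℝ) := by
        have : i + 1 ≤ k := by omega
        exact_mod_cast this
      linarith
    have hden : (1 - l) * n ≤ (n:ℝ) - i := by
      have : (i:ℝ) ≤ l * n := by
        have h1 : (i:ℝ) ≤ k := by exact_mod_cast Nat.sub_le k (j+1)
        linarith
      nlinarith
    have hstep : (Nat.choose n i : ℝ) ≤ (l/(1-l)) * Nat.choose n (i+1) := by
      have h1 : (Nat.choose n i : ℝ) * ((n:ℝ) - i) ≤ (Nat.choose n (i+1) : ℝ) * (l * n) := by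
        rw [← hidR]
        apply mul_le_mul_of_nonneg_left hnum (by positivity)
      rw [div_mul_eq_mul_div, le_div_iff₀ hl1]
      nlinarith [h1, hden, hn', (Nat.cast_nonneg (Nat.choose n i) : (0:ℝ) ≤ _),
        (Nat.cast_nonneg (Nat.choose n (i+1)) : (0:ℝ) ≤ _)]
    calc (Nat.choose n (k - (j+1)) : ℝ) = (Nat.choose n i : ℝ) := by rw [hi]
      _ ≤ (l/(1-l)) * Nat.choose n (i+1) := hstep
      _ = (l/(1-l)) * Nat.choose n (k - j) := by rw [hii]
      _ ≤ (l/(1-l)) * ((l/(1-l))^j * Nat.choose n k) := by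
          apply mul_le_mul_of_nonneg_left (ih hj') (by positivity)
      _ = (l/(1-l))^(j+1) * Nat.choose n k := by ring

theorem stmt3 (m : ℕ) (hm : 1 ≤ m) (l : ℝ) (hl0 : 0 < l) (hl : l < 1 / 2)
    (ε : ℝ) (hε : 0 < ε) :
    ∃ n₀ : ℕ, ∀ n : ℕ, n₀ ≤ n → 0 < n →
      (∑ A ∈ Fam n l, ((A.card.choose m : ℝ)) ^ 2) / ((Fam n l).card : ℝ) -
        ((∑ A ∈ Fam n l, ((A.card.choose m : ℝ))) / ((Fam n l).card : ℝ)) ^ 2 ≤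
      (1 + ε) * Real.sqrt n * (l * n) ^ (2 * m - 2) / (((m - 1).factorial : ℝ)) ^ 2 := by
  have hl1 : 0 < 1 - l := by linarith
  set r : ℝ := l / (1 - l) with hrdef
  have hr0 : 0 ≤ r := by positivity
  have hr1 : r < 1 := by rw [hrdef, div_lt_one hl1]; linarith
  have hsummable : Summable (fun j : ℕ => (j:ℝ)^2 * r^j) := by
    have := summable_pow_mul_geometric_of_norm_lt_one (R := ℝ) 2
      (r := r) (by rw [Real.norm_eq_abs, abs_of_nonneg hr0]; exact hr1)
    exact this
  set V : ℝ := ∑' j : ℕ, (j:ℝ)^2 * r^j with hVdef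
  have hV0 : 0 ≤ V := tsum_nonneg (fun j => by positivity)
  refine ⟨⌈V^2⌉₊ + 1, fun n hn hnpos => ?_⟩
  have hn' : (0:ℝ) < n := by exact_mod_cast hnpos
  have hln : 0 < l * n := by positivity
  set k := ⌊l * (n:ℝ)⌋₊ with hkdef
  have hkr : (k:ℝ) ≤ l * n := Nat.floor_le (le_of_lt hln)
  have hFam : Fam n l = Finset.univ.filter (fun A : Finset (Fin n) => A.card ≤ k) := by
    ext A
    simp only [Fam, Finset.mem_filter, Finset.mem_univ, true_and, hkdef]
    exact (Nat.le_floor_iff (le_of_lt hln)).symm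
  -- nonemptiness
  have hNmem : (∅ : Finset (Fin n)) ∈ Fam n l := by
    simp only [Fam, Finset.mem_filter, Finset.mem_univ, true_and, Finset.card_empty,
      Nat.cast_zero]
    positivity
  have hN : 0 < ((Fam n l).card : ℝ) := by
    have : 0 < (Fam n l).card := Finset.card_pos.mpr ⟨∅, hNmem⟩
    exact_mod_cast this
  set N : ℝ := ((Fam n l).card : ℝ) with hNdef
  set c : ℝ := (Nat.choose k m : ℝ) with hcdef
  set Ck1 : ℝ := (Nat.choose k (m-1) : ℝ) with hCk1def
  have hCk10 : 0 ≤ Ck1 := Nat.cast_nonneg _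
  -- Step A : variance bounded by second moment about c
  have hA := var_le_sq (Fam n l) (fun A => (A.card.choose m : ℝ)) c hN
  -- Step B : pointwise bound
  have hB : ∀ A ∈ Fam n l,
      ((A.card.choose m : ℝ) - c)^2 ≤ (((k - A.card : ℕ):ℝ))^2 * Ck1^2 := by
    intro A hA'
    have hcard : A.card ≤ k := by
      rw [hFam] at hA'
      exact (Finset.mem_filter.mp hA').2
    have hm1 : m - 1 + 1 = m := Nat.succ_pred_eq_of_pos hm
    have hnat : Nat.choose k m ≤ Nat.choose A.card m + (k - A.card) * Nat.choose k (m-1) := by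
      have := choose_lip (m-1) k A.card hcard
      rwa [hm1] at this
    have hmono : Nat.choose A.card m ≤ Nat.choose k m := Nat.choose_le_choose m hcard
    have hnatR : c - (A.card.choose m : ℝ) ≤ ((k - A.card : ℕ):ℝ) * Ck1 := by
      rw [hcdef, hCk1def]
      have := (Nat.cast_le (α := ℝ)).mpr hnat
      push_cast at this ⊢
      linarith
    have hge : (0:ℝ) ≤ c - (A.card.choose m : ℝ) := by
      rw [hcdef]
      exact sub_nonneg.mpr ((Nat.cast_le (α := ℝ)).mpr hmono)
    calc ((A.card.choose m : ℝ) - c)^2 = (c - (A.card.choose m : ℝ))^2 := by ring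
      _ ≤ (((k - A.card : ℕ):ℝ) * Ck1)^2 := pow_le_pow_left₀ hge hnatR 2
      _ = (((k - A.card : ℕ):ℝ))^2 * Ck1^2 := by ring
  -- Step C : sum of fiber weights
  have hC : ∑ A ∈ Fam n l, (((k - A.card : ℕ):ℝ))^2 ≤ (Nat.choose n k : ℝ) * V := by
    have hfib : ∑ A ∈ Fam n l, (((k - A.card : ℕ):ℝ))^2
        = ∑ i ∈ Finset.range (k+1), (Nat.choose n i : ℝ) * (((k - i : ℕ):ℝ))^2 := by
      rw [hFam]
      exact sum_card_filter n k (fun i => (((k - i : ℕ):ℝ))^2)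
    rw [hfib]
    have hrefl : ∑ i ∈ Finset.range (k+1), (Nat.choose n i : ℝ) * (((k - i : ℕ):ℝ))^2
        = ∑ j ∈ Finset.range (k+1), (Nat.choose n (k-j) : ℝ) * (((k - (k-j) : ℕ):ℝ))^2 := by
      rw [← Finset.sum_range_reflect]
      apply Finset.sum_congr rfl
      intro j hj
      congr 1 <;> congr 2 <;> omega
    rw [hrefl]
    have hterm : ∀ j ∈ Finset.range (k+1),
        (Nat.choose n (k-j) : ℝ) * (((k - (k-j) : ℕ):ℝ))^2 ≤ (Nat.choose n k : ℝ) * ((j:ℝ)^2 * r^j) := by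
      intro j hj
      have hjk : j ≤ k := Nat.lt_succ_iff.mp (Finset.mem_range.mp hj)
      have hkk : k - (k - j) = j := by omega
      rw [hkk]
      have hdec := choose_decay l hl0 hl n k hnpos hkr j hjk
      calc (Nat.choose n (k-j) : ℝ) * ((j:ℝ))^2 ≤ (r^j * Nat.choose n k) * ((j:ℝ))^2 := by
            apply mul_le_mul_of_nonneg_right hdec (by positivity)
        _ = (Nat.choose n k : ℝ) * ((j:ℝ)^2 * r^j) := by ring
    calc ∑ j ∈ Finset.range (k+1), (Nat.choose n (k-j) : ℝ) * (((k - (k-j) : ℕ):ℝ))^2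
        ≤ ∑ j ∈ Finset.range (k+1), (Nat.choose n k : ℝ) * ((j:ℝ)^2 * r^j) :=
          Finset.sum_le_sum hterm
      _ = (Nat.choose n k : ℝ) * ∑ j ∈ Finset.range (k+1), (j:ℝ)^2 * r^j := by
          rw [Finset.mul_sum]
      _ ≤ (Nat.choose n k : ℝ) * V := by
          apply mul_le_mul_of_nonneg_left _ (Nat.cast_nonneg _)
          exact Summable.sum_le_tsum _ (fun j _ => by positivity) hsummable
  -- choose n k ≤ N
  have hNk : (Nat.choose n k : ℝ) ≤ N := by
    have hsub : Finset.powersetCard k (Finset.univ : Finset (Fin n)) ⊆ Fam n l := by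
      intro A hA'
      rw [hFam]
      simp only [Finset.mem_filter, Finset.mem_univ, true_and]
      rw [(Finset.mem_powersetCard.mp hA').2]
    have := Finset.card_le_card hsub
    rw [Finset.card_powersetCard, Finset.card_univ, Fintype.card_fin] at this
    rw [hNdef]
    exact_mod_cast this
  -- combine : second moment about c over N ≤ Ck1^2 * V
  have hMain : (∑ A ∈ Fam n l, ((A.card.choose m : ℝ) - c)^2) / N ≤ Ck1^2 * V := by
    rw [div_le_iff₀ hN]
    calc ∑ A ∈ Fam n l, ((A.card.choose m : ℝ) - c)^2
        ≤ ∑ A ∈ Fam n l, (((k - A.card : ℕ):ℝ))^2 * Ck1^2 := Finset.sum_le_sum hB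
      _ = (∑ A ∈ Fam n l, (((k - A.card : ℕ):ℝ))^2) * Ck1^2 := by rw [← Finset.sum_mul]
      _ ≤ ((Nat.choose n k : ℝ) * V) * Ck1^2 :=
          mul_le_mul_of_nonneg_right hC (by positivity)
      _ ≤ (N * V) * Ck1^2 := by
          apply mul_le_mul_of_nonneg_right (mul_le_mul_of_nonneg_right hNk hV0) (by positivity)
      _ = Ck1^2 * V * N := by ring
  -- bound Ck1
  have hCk1 : Ck1 ≤ (l*n)^(m-1) / ((m-1).factorial : ℝ) := by
    have hdesc : Nat.choose k (m-1) * (m-1).factorial ≤ k^(m-1) := by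
      rw [Nat.mul_comm, ← Nat.descFactorial_eq_factorial_mul_choose]
      exact Nat.descFactorial_le_pow k (m-1)
    have hfacpos : (0:ℝ) < ((m-1).factorial : ℝ) := by exact_mod_cast (m-1).factorial_pos
    rw [hCk1def, le_div_iff₀ hfacpos]
    calc (Nat.choose k (m-1) : ℝ) * ((m-1).factorial : ℝ) ≤ ((k:ℝ))^(m-1) := by
          exact_mod_cast hdesc
      _ ≤ (l*n)^(m-1) := pow_le_pow_left₀ (Nat.cast_nonneg k) hkr _
  -- V ≤ sqrt n
  have hVsqrt : V ≤ Real.sqrt n := by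
    have h1 : V^2 ≤ (n:ℝ) := by
      calc V^2 ≤ (⌈V^2⌉₊ : ℝ) := Nat.le_ceil _
        _ ≤ (n:ℝ) := by exact_mod_cast le_trans (Nat.le_succ _) hn
    calc V = Real.sqrt (V^2) := (Real.sqrt_sq hV0).symm
      _ ≤ Real.sqrt n := Real.sqrt_le_sqrt h1
  -- final assembly
  have hfacpos : (0:ℝ) < ((m-1).factorial : ℝ)^2 := by positivity
  have hpow : ((l*n)^(m-1))^2 = (l*n)^(2*m-2) := by
    rw [← pow_mul]
    congr 1
    omega
  have hfinal : Ck1^2 * V ≤ (1 + ε) * Real.sqrt n * (l * n) ^ (2*m-2) / ((m-1).factorial : ℝ)^2 := by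
    have hCk1sq : Ck1^2 ≤ (l*n)^(2*m-2) / ((m-1).factorial : ℝ)^2 := by
      calc Ck1^2 ≤ ((l*n)^(m-1) / ((m-1).factorial : ℝ))^2 :=
            pow_le_pow_left₀ hCk10 hCk1 2
        _ = (l*n)^(2*m-2) / ((m-1).factorial : ℝ)^2 := by
            rw [div_pow, hpow]
    have hW : V ≤ (1+ε) * Real.sqrt n := by
      have hs0 : 0 ≤ Real.sqrt (n:ℝ) := Real.sqrt_nonneg _
      nlinarith
    calc Ck1^2 * V ≤ ((l*n)^(2*m-2) / ((m-1).factorial : ℝ)^2) * ((1+ε) * Real.sqrt n) := by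
          apply mul_le_mul hCk1sq hW hV0 (by positivity)
      _ = (1 + ε) * Real.sqrt n * (l * n) ^ (2*m-2) / ((m-1).factorial : ℝ)^2 := by
          ring
  exact le_trans hA (le_trans hMain hfinal)
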